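/- Let A, B be nonsingular d×d integer matrices and let N_0 be a permuted Hermite normal form of B (so in particular B is UP-equivalent to N_0). Let S_d = ⊔_{i=1}^ℓ G(N_0) g_i be a right coset decomposition with respect to the pattern group G(N_0). Then A is UP-equivalent to B if and only if H(A · g_i^{-1}) belongs to the orbit O(N_0) = { P_g N_0 P_g^{-1} : g ∈ G(N_0) } for some i ∈ {1, ..., ℓ}. -/

import Mathlib

def IsHNF {n : ℕ} (H : Matrix (Fin n) (Fin n) ℤ) : Prop :=
  (∀ i j : Fin n, j < i → H i j = 0) ∧
  (∀ i : Fin n, 0 < H i i) ∧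
  (∀ i j : Fin n, i < j → 0 ≤ H i j ∧ H i j < H j j)

def IsHNFOf {n : ℕ} (H A : Matrix (Fin n) (Fin n) ℤ) : Prop :=
  IsHNF H ∧ ∃ U : Matrix (Fin n) (Fin n) ℤ, IsUnit U.det ∧ U * A = H

def UPEquiv {ι : Type*} [Fintype ι] [DecidableEq ι] (X Y : Matrix ι ι ℤ) : Prop :=
  ∃ U : Matrix ι ι ℤ, IsUnit U.det ∧ ∃ σ : Equiv.Perm ι, U * X = Y.submatrix id ⇑σ

namespace Stmt11Aux
variable {d : ℕ}

def P (σ : Equiv.Perm (Fin d)) : Matrix (Fin d) (Fin d) ℤ :=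
  (1 : Matrix (Fin d) (Fin d) ℤ).submatrix ⇑σ id

lemma P_mul (σ : Equiv.Perm (Fin d)) (X : Matrix (Fin d) (Fin d) ℤ) :
    P σ * X = X.submatrix ⇑σ id := by
  have h := Matrix.submatrix_mul_equiv (1 : Matrix (Fin d) (Fin d) ℤ) X ⇑σ
    (Equiv.refl (Fin d)) (id : Fin d → Fin d)
  simpa [P] using h

lemma mul_P (X : Matrix (Fin d) (Fin d) ℤ) (σ : Equiv.Perm (Fin d)) :
    X * P σ = X.submatrix id ⇑σ⁻¹ := by
  ext i j
  simp only [P, Matrix.mul_apply, Matrix.submatrix_apply, Matrix.one_apply, id_eq]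
  rw [Finset.sum_eq_single (σ⁻¹ j)]
  · simp
  · intro k _ hk
    rw [if_neg, mul_zero]
    intro h; exact hk (by rw [← h]; simp)
  · simp

lemma P_mul_P (σ π : Equiv.Perm (Fin d)) : P σ * P π = P (π * σ) := by
  rw [P_mul]; simp [P, Matrix.submatrix_submatrix]

lemma P_one : P (1 : Equiv.Perm (Fin d)) = 1 := by
  simp [P]

lemma P_mul_P_inv (σ : Equiv.Perm (Fin d)) : P σ * P σ⁻¹ = 1 := by
  rw [P_mul_P]; simp [P_one]

lemma P_inv_mul_P (σ : Equiv.Perm (Fin d)) : P σ⁻¹ * P σ = 1 := by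
  rw [P_mul_P]; simp [P_one]

lemma isUnit_det_P (σ : Equiv.Perm (Fin d)) : IsUnit (P σ).det := by
  apply IsUnit.of_mul_eq_one (P σ⁻¹).det
  rw [← Matrix.det_mul, P_mul_P_inv, Matrix.det_one]

lemma submatrix_id_eq (X : Matrix (Fin d) (Fin d) ℤ) (σ : Equiv.Perm (Fin d)) :
    X.submatrix id ⇑σ = X * P σ⁻¹ := by rw [mul_P, inv_inv]

lemma conj_eq (X : Matrix (Fin d) (Fin d) ℤ) (ρ : Equiv.Perm (Fin d)) :
    P ρ * X * P ρ⁻¹ = X.submatrix ⇑ρ ⇑ρ := by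
  rw [P_mul, mul_P, inv_inv]
  simp [Matrix.submatrix_submatrix]

/-- Conjugating `N₀` by a block-preserving permutation preserves HNF. -/
lemma hnf_conj {s : ℕ} (N₀ : Matrix (Fin d) (Fin d) ℤ)
    (b : Fin d → Fin (s + 1)) (hbmono : Monotone b)
    (r : Fin (s + 1) → ℤ) (hrpos : ∀ i, 0 < r i)
    (hdiag : ∀ i j : Fin d, b i = b j → N₀ i j = if i = j then r (b i) else 0)
    (hlow : ∀ i j : Fin d, b j < b i → N₀ i j = 0)
    (hHNF : IsHNF N₀)
    (ρ : Equiv.Perm (Fin d)) (hρ : ∀ x, b (ρ x) = b x) :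
    IsHNF (N₀.submatrix ⇑ρ ⇑ρ) := by
  have hlt : ∀ {i j : Fin d}, b i < b j → ρ i < ρ j := by
    intro i j hb
    by_contra h
    push_neg at h
    have h2 := hbmono h
    rw [hρ, hρ] at h2
    exact absurd hb (not_lt.mpr h2)
  refine ⟨?_, ?_, ?_⟩
  · intro i j hji
    simp only [Matrix.submatrix_apply]
    rcases lt_or_eq_of_le (hbmono hji.le) with hb | hb
    · exact hlow _ _ (by rw [hρ, hρ]; exact hb)
    · rw [hdiag _ _ (by rw [hρ, hρ, hb]), if_neg (by simp [hji.ne'])]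
  · intro i
    simp only [Matrix.submatrix_apply]
    rw [hdiag _ _ rfl, if_pos rfl, hρ]
    exact hrpos _
  · intro i j hij
    simp only [Matrix.submatrix_apply]
    have hjj : N₀ (ρ j) (ρ j) = r (b j) := by
      rw [hdiag _ _ rfl, if_pos rfl, hρ]
    rcases lt_or_eq_of_le (hbmono hij.le) with hb | hb
    · exact hHNF.2.2 _ _ (hlt hb)
    · rw [hdiag _ _ (by rw [hρ, hρ, hb]), if_neg (by simp [hij.ne]), hjj]
      exact ⟨le_refl 0, hrpos _⟩

end Stmt11Aux

open Stmt11Aux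

/-- Coset criterion for UP-equivalence via a permuted Hermite normal form `N₀` of `B`.
The block structure of `N₀ ∈ M(r, m)` is encoded by a monotone surjection
`b : Fin d → Fin (s+1)` (consecutive blocks), with `i`-th diagonal block `r i • I` and
`r` strictly increasing and positive.  The pattern group `G(N₀)` consists of the
permutations preserving each block and fixing the last block pointwise.  Given a right
coset decomposition `S_d = ⨆ G(N₀) gᵢ`, we have `A ≃_UP B` iff `H(A ⋅ gᵢ⁻¹)` lies in the
orbit `{P_τ N₀ P_τ⁻¹ : τ ∈ G(N₀)}` for some `i`. -/
theorem stmt11 {d s : ℕ} (A B N₀ : Matrix (Fin d) (Fin d) ℤ)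
    (hA : A.det ≠ 0) (hB : B.det ≠ 0)
    (b : Fin d → Fin (s + 1)) (hbmono : Monotone b) (hbsurj : Function.Surjective b)
    (r : Fin (s + 1) → ℤ) (hrpos : ∀ i, 0 < r i) (hrmono : StrictMono r)
    (hdiag : ∀ i j : Fin d, b i = b j → N₀ i j = if i = j then r (b i) else 0)
    (hlow : ∀ i j : Fin d, b j < b i → N₀ i j = 0)
    (hHNF : IsHNF N₀)
    (hBN : ∃ τ : Equiv.Perm (Fin d), IsHNFOf N₀ (B.submatrix id ⇑τ))
    (ℓ : ℕ) (g : Fin ℓ → Equiv.Perm (Fin d))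
    (hcoset : ∀ σ : Equiv.Perm (Fin d), ∃! i : Fin ℓ,
      (∀ x, b ((σ * (g i)⁻¹) x) = b x) ∧
      (∀ x, b x = Fin.last s → (σ * (g i)⁻¹) x = x)) :
    UPEquiv A B ↔
      ∃ i : Fin ℓ, ∃ H : Matrix (Fin d) (Fin d) ℤ,
        IsHNFOf H (A.submatrix id ⇑(g i)⁻¹) ∧
        ∃ τ : Equiv.Perm (Fin d),
          (∀ x, b (τ x) = b x) ∧ (∀ x, b x = Fin.last s → τ x = x) ∧
          H = N₀.submatrix ⇑τ⁻¹ ⇑τ⁻¹ := by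
  obtain ⟨τ, _, V, hV, hVB⟩ := hBN
  have hVB' : V * B = N₀ * P τ := by
    rw [submatrix_id_eq] at hVB
    calc V * B = V * (B * P τ⁻¹) * P τ := by
          rw [mul_assoc V (B * P τ⁻¹) (P τ), mul_assoc B (P τ⁻¹) (P τ),
            P_inv_mul_P, mul_one]
      _ = N₀ * P τ := by rw [hVB]
  constructor
  · rintro ⟨U, hU, σ, hUA⟩
    rw [submatrix_id_eq] at hUA
    obtain ⟨i, ⟨hb1, hb2⟩, -⟩ := hcoset (τ⁻¹ * σ)
    set ρ : Equiv.Perm (Fin d) := τ⁻¹ * σ * (g i)⁻¹ with hρdef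
    have hbinv : ∀ x, b (ρ⁻¹ x) = b x := by
      intro x
      have h := hb1 (ρ⁻¹ x)
      rw [show ρ (ρ⁻¹ x) = x from ρ.apply_symm_apply x] at h
      exact h.symm
    refine ⟨i, N₀.submatrix ⇑ρ ⇑ρ,
      ⟨hnf_conj N₀ b hbmono r hrpos hdiag hlow hHNF ρ hb1,
       P ρ * V * U, ?_, ?_⟩, ρ⁻¹, hbinv, ?_, by rw [inv_inv]⟩
    · rw [Matrix.det_mul, Matrix.det_mul]
      exact ((isUnit_det_P ρ).mul hV).mul hU
    · rw [submatrix_id_eq, inv_inv]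
      have hperm : g i * σ⁻¹ * τ = ρ⁻¹ := by rw [hρdef]; group
      calc P ρ * V * U * (A * P (g i))
          = P ρ * (V * (U * A)) * P (g i) := by noncomm_ring
        _ = P ρ * (V * (B * P σ⁻¹)) * P (g i) := by rw [hUA]
        _ = P ρ * N₀ * (P τ * (P σ⁻¹ * P (g i))) := by
            rw [← mul_assoc V B, hVB']; noncomm_ring
        _ = P ρ * N₀ * P (g i * σ⁻¹ * τ) := by
            rw [P_mul_P σ⁻¹ (g i), P_mul_P τ (g i * σ⁻¹)]
        _ = P ρ * N₀ * P ρ⁻¹ := by rw [hperm]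
        _ = N₀.submatrix ⇑ρ ⇑ρ := conj_eq N₀ ρ
    · intro x hx
      have h1 : b (ρ⁻¹ x) = Fin.last s := by rw [hbinv, hx]
      have h2 := hb2 (ρ⁻¹ x) h1
      rw [show ρ (ρ⁻¹ x) = x from ρ.apply_symm_apply x] at h2
      exact h2.symm
  · rintro ⟨i, H, ⟨hH, W, hW, hWA⟩, τ', hτ1, hτ2, hHeq⟩
    rw [submatrix_id_eq, inv_inv] at hWA
    obtain ⟨v, hv⟩ := (Matrix.isUnit_iff_isUnit_det V).mpr hV
    have hN : (↑v : Matrix (Fin d) (Fin d) ℤ) * (B * P τ⁻¹) = N₀ := by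
      rw [hv, ← mul_assoc, hVB', mul_assoc, P_mul_P_inv, mul_one]
    have key : W * A = P τ'⁻¹ * N₀ * P ((g i)⁻¹ * τ') := by
      calc W * A = W * (A * P (g i)) * P (g i)⁻¹ := by
            rw [mul_assoc W (A * P (g i)) (P (g i)⁻¹), mul_assoc A, P_mul_P_inv,
              mul_one]
        _ = H * P (g i)⁻¹ := by rw [hWA]
        _ = P τ'⁻¹ * N₀ * P τ' * P (g i)⁻¹ := by
            rw [hHeq, ← conj_eq N₀ τ'⁻¹, inv_inv]
        _ = P τ'⁻¹ * N₀ * P ((g i)⁻¹ * τ') := by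
            rw [mul_assoc (P τ'⁻¹ * N₀), P_mul_P]
    refine ⟨(↑v⁻¹ : Matrix (Fin d) (Fin d) ℤ) * P τ' * W, ?_, τ * τ'⁻¹ * g i, ?_⟩
    · rw [Matrix.det_mul, Matrix.det_mul]
      have h1 : IsUnit (↑v⁻¹ : Matrix (Fin d) (Fin d) ℤ).det := by
        apply IsUnit.of_mul_eq_one (↑v : Matrix (Fin d) (Fin d) ℤ).det
        rw [← Matrix.det_mul, v.inv_mul, Matrix.det_one]
      exact (h1.mul (isUnit_det_P τ')).mul hW
    · have hperm : ((g i)⁻¹ * τ' * τ⁻¹)⁻¹ = τ * τ'⁻¹ * g i := by group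
      calc (↑v⁻¹ : Matrix (Fin d) (Fin d) ℤ) * P τ' * W * A
          = ↑v⁻¹ * (P τ' * P τ'⁻¹) * N₀ * P ((g i)⁻¹ * τ') := by
            rw [mul_assoc _ W A, key]; noncomm_ring
        _ = ↑v⁻¹ * (↑v * (B * P τ⁻¹)) * P ((g i)⁻¹ * τ') := by
            rw [P_mul_P_inv, mul_one, hN]
        _ = B * P τ⁻¹ * P ((g i)⁻¹ * τ') := by
            rw [← mul_assoc (↑v⁻¹ : Matrix (Fin d) (Fin d) ℤ), v.inv_mul, one_mul]
        _ = B * P ((g i)⁻¹ * τ' * τ⁻¹) := by rw [mul_assoc B, P_mul_P]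
        _ = B.submatrix id ⇑(τ * τ'⁻¹ * g i) := by rw [mul_P, hperm]
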